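/- Let A be a commutative unital ring equipped with an iterative Hasse-Schmidt derivation (Id_A, D_1, D_2, ...). Define products u(n)v := D_{-n-1}(u)·v for n < 0 and u(n)v := 0 for n ≥ 0. Then A with these products and vacuum element 1 is a vertex ring: the truncation condition, vacuum axioms, and the Jacobi identity all hold. -/

import Mathlib

noncomputable section

/-- Binomial coefficient `C(m, n)` for integer `m` and natural `n`:
`C(m,n) = m(m-1)⋯(m-n+1)/n!`. -/
def ibin (m : ℤ) (n : ℕ) : ℤ :=
  if 0 ≤ m then ((m.toNat.choose n : ℕ) : ℤ)
  else (-1) ^ n * ((((n : ℤ) - m - 1).toNat.choose n : ℕ) : ℤ)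

/-- Binomial coefficient `C(m, n)` for integers `m, n`, zero when `n < 0`. -/
def ibinZ (m n : ℤ) : ℤ := if 0 ≤ n then ibin m n.toNat else 0

/-- A vertex ring structure on an additive abelian group `V`: biadditive
products `mul n u v = u(n)v` for all `n : ℤ`, a vacuum element `one = 𝟙`,
satisfying truncation, the vacuum axioms, and the Jacobi identity. -/
structure VertexRing (V : Type*) [AddCommGroup V] where
  mul : ℤ → V → V → V
  one : V
  add_left : ∀ (n : ℤ) (u u' v : V), mul n (u + u') v = mul n u v + mul n u' v
  add_right : ∀ (n : ℤ) (u v v' : V), mul n u (v + v') = mul n u v + mul n u v'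
  trunc : ∀ u v : V, ∃ n₀ : ℤ, 0 ≤ n₀ ∧ ∀ n : ℤ, n₀ ≤ n → mul n u v = 0
  vac_create : ∀ u : V, mul (-1) u one = u
  vac_ann : ∀ (u : V) (n : ℤ), 0 ≤ n → mul n u one = 0
  jacobi : ∀ (r s t : ℤ) (u v w : V),
      (∑ᶠ i : ℕ, ibin r i • mul (r + s - (i : ℤ)) (mul (t + (i : ℤ)) u v) w) =
      (∑ᶠ i : ℕ, ((-1) ^ i * ibin t i) •
        (mul (r + t - (i : ℤ)) u (mul (s + (i : ℤ)) v w)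
          - (((-1 : ℤˣ) ^ t : ℤˣ) : ℤ) • mul (s + t - (i : ℤ)) v (mul (r + (i : ℤ)) u w)))

/-- The canonical Hasse–Schmidt derivation of a vertex ring: `D m u = u(-m-1)𝟙`. -/
def VertexRing.D {V : Type*} [AddCommGroup V] (R : VertexRing V) (m : ℕ) (u : V) : V :=
  R.mul (-(m : ℤ) - 1) u R.one

/-- The center of a vertex ring: states whose vertex operator is the constant
`u(-1)`, i.e. `u(n) = 0` for all `n ≠ -1`. -/
def VertexRing.center {V : Type*} [AddCommGroup V] (R : VertexRing V) : Set V :=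
  {u | ∀ n : ℤ, n ≠ -1 → ∀ v : V, R.mul n u v = 0}



lemma ibin_of_nonneg {m : ℤ} (h : 0 ≤ m) (k : ℕ) : ibin m k = (m.toNat.choose k : ℤ) :=
  if_pos h

lemma ibin_of_neg {m : ℤ} (h : m < 0) (k : ℕ) :
    ibin m k = (-1) ^ k * ((((k : ℤ) - m - 1).toNat.choose k : ℕ) : ℤ) :=
  if_neg (by omega)

lemma ibin_zero (m : ℤ) : ibin m 0 = 1 := by
  by_cases h : 0 ≤ m
  · rw [ibin_of_nonneg h]; simp
  · rw [ibin_of_neg (by omega)]; simp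

lemma ibin_pascal (m : ℤ) (a : ℕ) : ibin (m + 1) (a + 1) = ibin m (a + 1) + ibin m a := by
  rcases lt_trichotomy m (-1) with hm | hm | hm
  · have h1 : m + 1 < 0 := by omega
    rw [ibin_of_neg (by omega), ibin_of_neg (by omega), ibin_of_neg (by omega)]
    push_cast
    set b : ℕ := ((a : ℤ) - m - 1).toNat with hbdef
    rw [show ((a : ℤ) + 1 - (m + 1) - 1).toNat = b by omega,
        show ((a : ℤ) + 1 - m - 1).toNat = b + 1 by omega,
        Nat.choose_succ_succ' b a]
    push_cast
    ring
  · subst hm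
    norm_num
    rw [ibin_of_nonneg le_rfl, ibin_of_neg (by norm_num : (-1:ℤ) < 0),
        ibin_of_neg (by norm_num : (-1:ℤ) < 0)]
    push_cast
    rw [show ((a : ℤ) + 1 - -1 - 1).toNat = a + 1 by omega,
        show ((a : ℤ) - -1 - 1).toNat = a by omega]
    simp [pow_succ]
  · have h0 : 0 ≤ m := by omega
    rw [ibin_of_nonneg (by omega), ibin_of_nonneg h0, ibin_of_nonneg h0]
    rw [show (m + 1).toNat = m.toNat + 1 by omega, Nat.choose_succ_succ' m.toNat a]
    push_cast; ring

lemma ibin_vandermonde (α : ℕ) (r : ℤ) (a : ℕ) :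
    ∑ j ∈ Finset.range (a + 1), (α.choose j : ℤ) * ibin r (a - j) = ibin ((α : ℤ) + r) a := by
  induction α generalizing a with
  | zero =>
    rw [Finset.sum_eq_single 0]
    · simp
    · intro j hj hj0
      rcases j with _ | j
      · omega
      · simp
    · simp
  | succ α ih =>
    cases a with
    | zero => simp [ibin_zero]
    | succ b =>
      rw [show ((α + 1 : ℕ) : ℤ) = (α : ℤ) + 1 by push_cast; ring,
          show (α : ℤ) + 1 + r = ((α : ℤ) + r) + 1 by ring, ibin_pascal,
          ← ih (b + 1), ← ih b,
          Finset.sum_range_succ' (fun j => ((α+1).choose j : ℤ) * ibin r (b + 1 - j)) (b+1),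
          Finset.sum_range_succ' (fun j => (α.choose j : ℤ) * ibin r (b + 1 - j)) (b+1)]
      have hc : ∀ j ∈ Finset.range (b+1),
          ((α+1).choose (j+1) : ℤ) * ibin r (b + 1 - (j+1)) =
          (α.choose (j+1) : ℤ) * ibin r (b + 1 - (j+1)) + (α.choose j : ℤ) * ibin r (b - j) := by
        intro j hj
        rw [Nat.choose_succ_succ α j, show b + 1 - (j+1) = b - j by omega]
        push_cast; ring
      rw [Finset.sum_congr rfl hc, Finset.sum_add_distrib]
      simp only [Nat.choose_zero_right, Nat.cast_one, Nat.sub_zero]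
      ring

lemma neg_one_zpow_val (t : ℤ) : (((-1 : ℤˣ) ^ t : ℤˣ) : ℤ) = (-1) ^ t.natAbs := by
  have h : ((-1 : ℤˣ) ^ t) = (-1 : ℤˣ) ^ (t.natAbs) := by
    rcases Int.natAbs_eq t with h | h
    · conv_lhs => rw [h]
      rw [zpow_natCast]
    · conv_lhs => rw [h]
      rw [zpow_neg, zpow_natCast, ← inv_pow]
      norm_num
  rw [h, Units.val_pow_eq_pow_val]
  simp

lemma neg_one_pow_congr' {m n : ℕ} (h : m % 2 = n % 2) : ((-1 : ℤ)) ^ m = (-1) ^ n := by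
  rcases Nat.even_or_odd m with he | ho
  · have hm := Nat.even_iff.mp he
    rw [he.neg_one_pow, (Nat.even_iff.mpr (by omega : n % 2 = 0)).neg_one_pow]
  · have hm := Nat.odd_iff.mp ho
    rw [ho.neg_one_pow, (Nat.odd_iff.mpr (by omega : n % 2 = 1)).neg_one_pow]

lemma sum_shift {A : Type*} [AddCommMonoid A] (f : ℤ → A) (M n : ℕ) (d : ℤ)
    (h : ∀ j : ℤ, f j ≠ 0 → 0 ≤ j ∧ j < M ∧ d ≤ j ∧ j < d + n) :
    ∑ i ∈ Finset.range M, f (i : ℤ) = ∑ α ∈ Finset.range n, f ((α : ℤ) + d) := by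
  classical
  rw [← Finset.sum_filter_ne_zero (s := Finset.range M),
      ← Finset.sum_filter_ne_zero (s := Finset.range n)]
  refine Finset.sum_nbij' (fun i => ((i : ℤ) - d).toNat) (fun α => ((α : ℤ) + d).toNat)
    ?_ ?_ ?_ ?_ ?_
  · intro i hi
    simp only [Finset.mem_filter, Finset.mem_range] at hi ⊢
    obtain ⟨hi1, hi2⟩ := hi
    have := h i hi2
    refine ⟨by omega, ?_⟩
    rw [show ((((i:ℤ) - d).toNat : ℤ) + d) = (i : ℤ) by omega]
    exact hi2
  · intro α hα
    simp only [Finset.mem_filter, Finset.mem_range] at hα ⊢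
    obtain ⟨hα1, hα2⟩ := hα
    have := h _ hα2
    refine ⟨by omega, ?_⟩
    rw [show ((((α:ℤ) + d).toNat : ℤ)) = ((α : ℤ) + d) by omega]
    exact hα2
  · intro i hi
    simp only [Finset.mem_filter, Finset.mem_range] at hi
    have := h i hi.2
    omega
  · intro α hα
    simp only [Finset.mem_filter, Finset.mem_range] at hα
    have := h _ hα.2
    omega
  · intro i hi
    simp only [Finset.mem_filter, Finset.mem_range] at hi
    have := h i hi.2
    congr 1
    omega

lemma choose_symm_add (x y : ℕ) : (x + y).choose x = (x + y).choose y := by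
  rw [← Nat.choose_symm (Nat.le_add_right x y), Nat.add_sub_cancel_left]

lemma key_scalar (r s t : ℤ) (α β : ℕ) (hab : (α : ℤ) + β = -(r + s + t) - 2) :
    (if t < 0 then
       ∑ i ∈ Finset.range ((-t - 1).toNat + 1), ibin r i * (α.choose ((-t - 1).toNat - i) : ℤ)
     else 0)
    = (if 0 ≤ (α : ℤ) + r + t + 1 then
         (-1) ^ ((α : ℤ) + r + t + 1).toNat * ibin t ((α : ℤ) + r + t + 1).toNat else 0)
      - (((-1 : ℤˣ) ^ t : ℤˣ) : ℤ) *
        (if 0 ≤ (β : ℤ) + s + t + 1 then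
           (-1) ^ ((β : ℤ) + s + t + 1).toNat * ibin t ((β : ℤ) + s + t + 1).toNat else 0) := by
  set k : ℤ := (α : ℤ) + r + t + 1 with hk
  set k' : ℤ := (β : ℤ) + s + t + 1 with hk'
  have hkk' : k + k' = t := by omega
  by_cases ht : t < 0
  · rw [if_pos ht]
    set a : ℕ := (-t - 1).toNat with hadef
    have haZ : (a : ℤ) = -t - 1 := by omega
    have hv : ∑ i ∈ Finset.range (a + 1), ibin r i * (α.choose (a - i) : ℤ)
        = ibin ((α : ℤ) + r) a := by
      rw [← ibin_vandermonde α r a,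
          ← Finset.sum_range_reflect (fun j => (α.choose j : ℤ) * ibin r (a - j)) (a + 1)]
      refine Finset.sum_congr rfl fun i hi => ?_
      simp only [Finset.mem_range] at hi
      rw [show a + 1 - 1 - i = a - i by omega, show a - (a - i) = i by omega]
      ring
    rw [hv]
    by_cases hk0 : 0 ≤ k
    · rw [if_pos hk0, if_neg (show ¬ 0 ≤ k' by omega)]
      rw [ibin_of_nonneg (show 0 ≤ (α : ℤ) + r by omega), ibin_of_neg ht]
      rw [show ((k.toNat : ℤ) - t - 1).toNat = k.toNat + a by omega,
          show ((α : ℤ) + r).toNat = k.toNat + a by omega]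
      have hsq : ((-1 : ℤ)) ^ k.toNat * ((-1 : ℤ)) ^ k.toNat = 1 := by
        rw [← pow_add]; exact Even.neg_one_pow ⟨k.toNat, rfl⟩
      rw [mul_zero, sub_zero, ← mul_assoc, hsq, one_mul,
          show k.toNat + a = a + k.toNat by ring, choose_symm_add]
    · by_cases hk'0 : 0 ≤ k'
      · rw [if_neg hk0, if_pos hk'0]
        rw [ibin_of_neg (show (α : ℤ) + r < 0 by omega), ibin_of_neg ht]
        rw [show ((a : ℤ) - ((α : ℤ) + r) - 1).toNat = a + k'.toNat by omega,
            show ((k'.toNat : ℤ) - t - 1).toNat = a + k'.toNat by omega]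
        have hsq' : ((-1 : ℤ)) ^ k'.toNat * ((-1 : ℤ)) ^ k'.toNat = 1 := by
          rw [← pow_add]; exact Even.neg_one_pow ⟨k'.toNat, rfl⟩
        rw [← mul_assoc ((-1 : ℤ) ^ k'.toNat) ((-1 : ℤ) ^ k'.toNat), hsq', one_mul]
        rw [neg_one_zpow_val, show t.natAbs = a + 1 by omega, choose_symm_add]
        rw [pow_succ]
        ring
      · rw [if_neg hk0, if_neg hk'0]
        rw [ibin_of_nonneg (show 0 ≤ (α : ℤ) + r by omega)]
        rw [Nat.choose_eq_zero_of_lt (show ((α : ℤ) + r).toNat < a by omega)]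
        simp
  · rw [if_neg ht]
    by_cases hk0 : 0 ≤ k
    · by_cases hk'0 : 0 ≤ k'
      · rw [if_pos hk0, if_pos hk'0, ibin_of_nonneg (show (0 : ℤ) ≤ t by omega),
            ibin_of_nonneg (show (0 : ℤ) ≤ t by omega), neg_one_zpow_val]
        have hsymm : t.toNat.choose k.toNat = t.toNat.choose k'.toNat := by
          rw [← Nat.choose_symm (show k.toNat ≤ t.toNat by omega)]
          congr 1
          omega
        have hsign : ((-1 : ℤ)) ^ k.toNat = (-1) ^ (t.natAbs) * (-1) ^ (k'.toNat) := by
          rw [← pow_add]; exact neg_one_pow_congr' (by omega)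
        rw [hsymm, hsign]
        ring
      · rw [if_pos hk0, if_neg hk'0, ibin_of_nonneg (show (0 : ℤ) ≤ t by omega)]
        rw [Nat.choose_eq_zero_of_lt (show t.toNat < k.toNat by omega)]
        simp
    · by_cases hk'0 : 0 ≤ k'
      · rw [if_neg hk0, if_pos hk'0, ibin_of_nonneg (show (0 : ℤ) ≤ t by omega)]
        rw [Nat.choose_eq_zero_of_lt (show t.toNat < k'.toNat by omega)]
        simp
      · exfalso; omega


def hsMul {A : Type*} [CommRing A] (D : ℕ → A → A) (n : ℤ) (u v : A) : A :=
  if n < 0 then D (-n - 1).toNat u * v else 0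

/-- definitions used in normal forms -/
def RxF (t d : ℤ) (α : ℕ) : ℤ :=
  if 0 ≤ (α : ℤ) + d then (-1) ^ (((α : ℤ) + d).toNat) * ibin t (((α : ℤ) + d).toNat) else 0

def LcF (r t : ℤ) (α : ℕ) : ℤ :=
  if t < 0 then
    ∑ i ∈ Finset.range ((-t - 1).toNat + 1), ibin r i * (α.choose ((-t - 1).toNat - i) : ℤ)
  else 0

lemma key_scalar' (r s t : ℤ) (α β : ℕ) (hab : (α : ℤ) + β = -(r + s + t) - 2) :
    LcF r t α = RxF t (r + t + 1) α - (((-1 : ℤˣ) ^ t : ℤˣ) : ℤ) * RxF t (s + t + 1) β := by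
  unfold RxF LcF
  rw [show (α : ℤ) + (r + t + 1) = (α : ℤ) + r + t + 1 by ring,
      show (β : ℤ) + (s + t + 1) = (β : ℤ) + s + t + 1 by ring]
  exact key_scalar r s t α β hab

lemma hs_jacobi {A : Type*} [CommRing A] (D : ℕ → A → A)
    (hadd : ∀ (m : ℕ) (u v : A), D m (u + v) = D m u + D m v)
    (hHS : ∀ (m : ℕ) (u v : A),
      D m (u * v) = ∑ i ∈ Finset.range (m + 1), D i u * D (m - i) v)
    (hiter : ∀ (i j : ℕ) (u : A), D i (D j u) = (i + j).choose i • D (i + j) u)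
    (r s t : ℤ) (u v w : A) :
    (∑ᶠ i : ℕ, ibin r i • hsMul D (r + s - (i : ℤ)) (hsMul D (t + (i : ℤ)) u v) w) =
    (∑ᶠ i : ℕ, ((-1) ^ i * ibin t i) •
      (hsMul D (r + t - (i : ℤ)) u (hsMul D (s + (i : ℤ)) v w)
        - (((-1 : ℤˣ) ^ t : ℤˣ) : ℤ) • hsMul D (s + t - (i : ℤ)) v (hsMul D (r + (i : ℤ)) u w))) := by
  classical
  have hD0 : ∀ m : ℕ, D m (0 : A) = 0 := by
    intro m
    have h := hadd m 0 0
    rw [add_zero] at h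
    have h2 : D m (0:A) + 0 = D m 0 + D m 0 := by rw [add_zero]; exact h
    exact (add_left_cancel h2).symm
  have hFneg : ∀ (n : ℤ), n < 0 → ∀ (x y : A), hsMul D n x y = D (-n - 1).toNat x * y :=
    fun n hn x y => if_pos hn
  have hFpos : ∀ (n : ℤ), 0 ≤ n → ∀ (x y : A), hsMul D n x y = 0 :=
    fun n hn x y => if_neg (by omega)
  have hF0l : ∀ (n : ℤ) (y : A), hsMul D n 0 y = 0 := by
    intro n y
    by_cases hn : n < 0
    · rw [hFneg n hn, hD0, zero_mul]
    · exact hFpos n (by omega) _ _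
  have hF0r : ∀ (n : ℤ) (x : A), hsMul D n x 0 = 0 := by
    intro n x
    by_cases hn : n < 0
    · rw [hFneg n hn, mul_zero]
    · exact hFpos n (by omega) _ _
  set n : ℕ := (-(r + s + t) - 1).toNat with hn
  set G : ℕ → A := fun α => D α u * D (n - 1 - α) v * w with hG
  set M : ℕ := (-s).toNat + (-r).toNat with hM
  -- RHS as a finite sum
  have hRfin : (∑ᶠ i : ℕ, ((-1) ^ i * ibin t i) •
      (hsMul D (r + t - (i : ℤ)) u (hsMul D (s + (i : ℤ)) v w)
        - (((-1 : ℤˣ) ^ t : ℤˣ) : ℤ) • hsMul D (s + t - (i : ℤ)) v (hsMul D (r + (i : ℤ)) u w)))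
      = ∑ i ∈ Finset.range M, (((-1) ^ i * ibin t i) •
      (hsMul D (r + t - (i : ℤ)) u (hsMul D (s + (i : ℤ)) v w)
        - (((-1 : ℤˣ) ^ t : ℤˣ) : ℤ) • hsMul D (s + t - (i : ℤ)) v (hsMul D (r + (i : ℤ)) u w))) := by
    apply finsum_eq_finset_sum_of_support_subset
    intro i hi
    simp only [Function.mem_support, ne_eq] at hi
    rw [Finset.coe_range, Set.mem_Iio]
    by_contra hc
    push_neg at hc
    apply hi
    rw [hFpos (s + i) (by omega), hF0r, hFpos (r + i) (by omega), hF0r, smul_zero, sub_zero,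
      smul_zero]
  -- split the RHS sum
  have hsplit : ∑ i ∈ Finset.range M, (((-1) ^ i * ibin t i) •
      (hsMul D (r + t - (i : ℤ)) u (hsMul D (s + (i : ℤ)) v w)
        - (((-1 : ℤˣ) ^ t : ℤˣ) : ℤ) • hsMul D (s + t - (i : ℤ)) v (hsMul D (r + (i : ℤ)) u w)))
      = (∑ i ∈ Finset.range M, ((-1) ^ i * ibin t i) •
          hsMul D (r + t - (i : ℤ)) u (hsMul D (s + (i : ℤ)) v w))
        - ∑ i ∈ Finset.range M, ((-1) ^ i * ibin t i) •
            ((((-1 : ℤˣ) ^ t : ℤˣ) : ℤ) • hsMul D (s + t - (i : ℤ)) v (hsMul D (r + (i : ℤ)) u w)) := by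
    rw [← Finset.sum_sub_distrib]
    exact Finset.sum_congr rfl fun i _ => smul_sub _ _ _
  -- X part
  have hXeq : (∑ i ∈ Finset.range M, ((-1) ^ i * ibin t i) •
      hsMul D (r + t - (i : ℤ)) u (hsMul D (s + (i : ℤ)) v w))
      = ∑ α ∈ Finset.range n, RxF t (r + t + 1) α • G α := by
    set f : ℤ → A := fun j => if 0 ≤ j then
      ((-1) ^ j.toNat * ibin t j.toNat) • hsMul D (r + t - j) u (hsMul D (s + j) v w) else 0
      with hf
    have step1 : ∀ i ∈ Finset.range M, ((-1) ^ i * ibin t i) •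
        hsMul D (r + t - (i : ℤ)) u (hsMul D (s + (i : ℤ)) v w) = f (i : ℤ) := by
      intro i _
      simp only [hf]
      rw [if_pos (Int.natCast_nonneg i), Int.toNat_natCast]
    rw [Finset.sum_congr rfl step1]
    have hsupp : ∀ j : ℤ, f j ≠ 0 → 0 ≤ j ∧ j < M ∧ (r + t + 1) ≤ j ∧ j < (r + t + 1) + n := by
      intro j hj
      have h0 : 0 ≤ j := by
        by_contra h
        exact hj (by simp only [hf]; rw [if_neg h])
      refine ⟨h0, ?_, ?_, ?_⟩
      · by_contra h
        push_neg at h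
        apply hj
        simp only [hf]
        rw [if_pos h0, hFpos (s + j) (by omega), hF0r, smul_zero]
      · by_contra h
        push_neg at h
        apply hj
        simp only [hf]
        rw [if_pos h0, hFpos (r + t - j) (by omega), smul_zero]
      · by_contra h
        push_neg at h
        apply hj
        simp only [hf]
        rw [if_pos h0, hFpos (s + j) (by omega), hF0r, smul_zero]
    rw [sum_shift f M n (r + t + 1) hsupp]
    refine Finset.sum_congr rfl fun α hα => ?_
    simp only [Finset.mem_range] at hα
    have hnZ : (n : ℤ) = -(r + s + t) - 1 := by omega
    simp only [hf, RxF]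
    rw [show (α : ℤ) + (r + t + 1) = (α : ℤ) + r + t + 1 by ring]
    by_cases hj : 0 ≤ (α : ℤ) + r + t + 1
    · rw [if_pos hj,
        show r + t - ((α : ℤ) + r + t + 1) = -(α : ℤ) - 1 by ring,
        show s + ((α : ℤ) + r + t + 1) = (α : ℤ) - n by omega,
        hFneg _ (by omega), hFneg _ (by omega),
        show (-(-(α : ℤ) - 1) - 1).toNat = α by omega,
        show (-((α : ℤ) - n) - 1).toNat = n - 1 - α by omega]
      rw [if_pos hj]
      simp only [hG]
      rw [mul_assoc]
    · rw [if_neg hj, if_neg hj, zero_smul]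
  -- Y part
  have hYeq : (∑ i ∈ Finset.range M, ((-1) ^ i * ibin t i) •
      ((((-1 : ℤˣ) ^ t : ℤˣ) : ℤ) • hsMul D (s + t - (i : ℤ)) v (hsMul D (r + (i : ℤ)) u w)))
      = ∑ α ∈ Finset.range n,
          ((((-1 : ℤˣ) ^ t : ℤˣ) : ℤ) * RxF t (s + t + 1) (n - 1 - α)) • G α := by
    set f : ℤ → A := fun j => if 0 ≤ j then
      ((-1) ^ j.toNat * ibin t j.toNat) •
        ((((-1 : ℤˣ) ^ t : ℤˣ) : ℤ) • hsMul D (s + t - j) v (hsMul D (r + j) u w)) else 0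
      with hf
    have step1 : ∀ i ∈ Finset.range M, ((-1) ^ i * ibin t i) •
        ((((-1 : ℤˣ) ^ t : ℤˣ) : ℤ) • hsMul D (s + t - (i : ℤ)) v (hsMul D (r + (i : ℤ)) u w))
        = f (i : ℤ) := by
      intro i _
      simp only [hf]
      rw [if_pos (Int.natCast_nonneg i), Int.toNat_natCast]
    rw [Finset.sum_congr rfl step1]
    have hsupp : ∀ j : ℤ, f j ≠ 0 → 0 ≤ j ∧ j < M ∧ (s + t + 1) ≤ j ∧ j < (s + t + 1) + n := by
      intro j hj
      have h0 : 0 ≤ j := by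
        by_contra h
        exact hj (by simp only [hf]; rw [if_neg h])
      refine ⟨h0, ?_, ?_, ?_⟩
      · by_contra h
        push_neg at h
        apply hj
        simp only [hf]
        rw [if_pos h0, hFpos (r + j) (by omega), hF0r, smul_zero, smul_zero]
      · by_contra h
        push_neg at h
        apply hj
        simp only [hf]
        rw [if_pos h0, hFpos (s + t - j) (by omega), smul_zero, smul_zero]
      · by_contra h
        push_neg at h
        apply hj
        simp only [hf]
        rw [if_pos h0, hFpos (r + j) (by omega), hF0r, smul_zero, smul_zero]
    rw [sum_shift f M n (s + t + 1) hsupp]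
    have hstep2 : ∀ β ∈ Finset.range n, f ((β : ℤ) + (s + t + 1))
        = ((((-1 : ℤˣ) ^ t : ℤˣ) : ℤ) * RxF t (s + t + 1) β) •
            (D (n - 1 - β) u * D β v * w) := by
      intro β hβ
      simp only [Finset.mem_range] at hβ
      have hnZ : (n : ℤ) = -(r + s + t) - 1 := by omega
      simp only [hf, RxF]
      rw [show (β : ℤ) + (s + t + 1) = (β : ℤ) + s + t + 1 by ring]
      by_cases hj : 0 ≤ (β : ℤ) + s + t + 1
      · rw [if_pos hj,
          show s + t - ((β : ℤ) + s + t + 1) = -(β : ℤ) - 1 by ring,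
          show r + ((β : ℤ) + s + t + 1) = (β : ℤ) - n by omega,
          hFneg _ (by omega), hFneg _ (by omega),
          show (-(-(β : ℤ) - 1) - 1).toNat = β by omega,
          show (-((β : ℤ) - n) - 1).toNat = n - 1 - β by omega]
        rw [if_pos hj, smul_smul, mul_comm ((-1 : ℤ) ^ ((β : ℤ) + s + t + 1).toNat *
          ibin t ((β : ℤ) + s + t + 1).toNat), mul_left_comm (D β v), ← mul_assoc]
        rw [mul_assoc (D (n - 1 - β) u)]
      · rw [if_neg hj, if_neg hj, mul_zero, zero_smul]
    rw [Finset.sum_congr rfl hstep2,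
      ← Finset.sum_range_reflect (fun β => ((((-1 : ℤˣ) ^ t : ℤˣ) : ℤ) * RxF t (s + t + 1) β) •
          (D (n - 1 - β) u * D β v * w)) n]
    refine Finset.sum_congr rfl fun α hα => ?_
    simp only [Finset.mem_range] at hα
    simp only [hG]
    rw [show n - 1 - (n - 1 - α) = α by omega]
  -- LHS
  have hLeq : (∑ᶠ i : ℕ, ibin r i • hsMul D (r + s - (i : ℤ)) (hsMul D (t + (i : ℤ)) u v) w)
      = ∑ α ∈ Finset.range n, LcF r t α • G α := by
    by_cases ht : t < 0
    · set a : ℕ := (-t - 1).toNat with ha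
      have haZ : (a : ℤ) = -t - 1 := by omega
      have hfin : (∑ᶠ i : ℕ, ibin r i • hsMul D (r + s - (i : ℤ)) (hsMul D (t + (i : ℤ)) u v) w)
          = ∑ i ∈ Finset.range (a + 1),
              ibin r i • hsMul D (r + s - (i : ℤ)) (hsMul D (t + (i : ℤ)) u v) w := by
        apply finsum_eq_finset_sum_of_support_subset
        intro i hi
        simp only [Function.mem_support, ne_eq] at hi
        rw [Finset.coe_range, Set.mem_Iio]
        by_contra hc
        push_neg at hc
        apply hi
        rw [hFpos (t + i) (by omega), hF0l, smul_zero]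
      rw [hfin]
      have hL2 : ∀ i ∈ Finset.range (a + 1),
          ibin r i • hsMul D (r + s - (i : ℤ)) (hsMul D (t + (i : ℤ)) u v) w
          = ∑ α ∈ Finset.range n, (ibin r i * (α.choose (a - i) : ℤ)) • G α := by
        intro i hi
        simp only [Finset.mem_range] at hi
        by_cases hc : r + s - (i : ℤ) < 0
        · set m : ℕ := ((i : ℤ) - r - s - 1).toNat with hm
          have hmZ : (m : ℤ) = (i : ℤ) - r - s - 1 := by omega
          have hnZ : (n : ℤ) = -(r + s + t) - 1 := by omega
          set f : ℤ → A := fun j => if 0 ≤ j ∧ j < (n : ℤ) then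
            (ibin r i * ((j.toNat.choose (a - i) : ℕ) : ℤ)) • G j.toNat else 0 with hf
          rw [hFneg _ (by omega : t + (i : ℤ) < 0),
            show (-(t + (i : ℤ)) - 1).toNat = a - i by omega,
            hFneg _ hc, show (-(r + s - (i : ℤ)) - 1).toNat = m by omega,
            hHS m (D (a - i) u) v, Finset.sum_mul, Finset.smul_sum]
          have hterm : ∀ p ∈ Finset.range (m + 1),
              ibin r i • (D p (D (a - i) u) * D (m - p) v * w)
              = f ((p : ℤ) + ((a : ℤ) - (i : ℤ))) := by
            intro p hp
            simp only [Finset.mem_range] at hp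
            simp only [hf]
            rw [if_pos ⟨by omega, by omega⟩,
              show ((p : ℤ) + ((a : ℤ) - (i : ℤ))).toNat = p + (a - i) by omega]
            simp only [hG]
            rw [show n - 1 - (p + (a - i)) = m - p by omega,
              hiter p (a - i) u, choose_symm_add p (a - i),
              smul_mul_assoc, smul_mul_assoc, ← natCast_zsmul, smul_smul]
          rw [Finset.sum_congr rfl hterm,
            ← sum_shift f n (m + 1) ((a : ℤ) - (i : ℤ)) ?_]
          · refine Finset.sum_congr rfl fun α hα => ?_
            simp only [Finset.mem_range] at hα
            simp only [hf]
            rw [if_pos ⟨Int.natCast_nonneg α, by omega⟩, Int.toNat_natCast]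
          · intro j hj
            have hcond : 0 ≤ j ∧ j < (n : ℤ) := by
              by_contra h
              exact hj (by simp only [hf]; rw [if_neg h])
            refine ⟨hcond.1, by omega, ?_, by omega⟩
            by_contra h
            push_neg at h
            apply hj
            simp only [hf]
            rw [if_pos hcond, Nat.choose_eq_zero_of_lt (by omega), Nat.cast_zero, mul_zero,
              zero_smul]
        · rw [hFpos _ (by omega), smul_zero]
          symm
          apply Finset.sum_eq_zero
          intro α hα
          simp only [Finset.mem_range] at hα
          rw [Nat.choose_eq_zero_of_lt (by omega), Nat.cast_zero, mul_zero, zero_smul]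
      rw [Finset.sum_congr rfl hL2, Finset.sum_comm]
      refine Finset.sum_congr rfl fun α _ => ?_
      rw [← Finset.sum_smul, LcF, if_pos ht]
    · rw [finsum_eq_zero_of_forall_eq_zero (fun i => by
        rw [hFpos (t + i) (by omega), hF0l, smul_zero])]
      symm
      apply Finset.sum_eq_zero
      intro α _
      rw [LcF, if_neg ht, zero_smul]
  -- combine
  rw [hLeq, hRfin, hsplit, hXeq, hYeq, ← Finset.sum_sub_distrib]
  refine Finset.sum_congr rfl fun α hα => ?_
  simp only [Finset.mem_range] at hα
  rw [← sub_smul]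
  congr 1
  have hab : (α : ℤ) + ((n - 1 - α : ℕ) : ℤ) = -(r + s + t) - 2 := by omega
  exact key_scalar' r s t α (n - 1 - α) hab


/-- A commutative unital ring with an iterative Hasse–Schmidt derivation is a
vertex ring with vacuum `1` and products `u(n)v = D_{-n-1}(u)·v` for `n < 0`,
`u(n)v = 0` for `n ≥ 0`. -/
theorem vertexRing_of_commRing_HS (A : Type*) [CommRing A] (D : ℕ → A → A)
    (hadd : ∀ (m : ℕ) (u v : A), D m (u + v) = D m u + D m v)
    (hid : ∀ u : A, D 0 u = u)
    (hHS : ∀ (m : ℕ) (u v : A),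
      D m (u * v) = ∑ i ∈ Finset.range (m + 1), D i u * D (m - i) v)
    (hiter : ∀ (i j : ℕ) (u : A), D i (D j u) = (i + j).choose i • D (i + j) u) :
    ∃ R : VertexRing A, R.one = 1 ∧
      ∀ (n : ℤ) (u v : A),
        R.mul n u v = if n < 0 then D (-n - 1).toNat u * v else 0 := by
  classical
  refine ⟨⟨hsMul D, 1, ?_, ?_, ?_, ?_, ?_, ?_⟩, rfl, fun n u v => rfl⟩
  · intro n u u' v
    by_cases hn : n < 0
    · simp only [hsMul, if_pos hn, hadd, add_mul]
    · simp only [hsMul, if_neg hn, add_zero]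
  · intro n u v v'
    by_cases hn : n < 0
    · simp only [hsMul, if_pos hn, mul_add]
    · simp only [hsMul, if_neg hn, add_zero]
  · intro u v
    exact ⟨0, le_refl 0, fun n hn => if_neg (by omega)⟩
  · intro u
    show hsMul D (-1) u 1 = u
    rw [hsMul, if_pos (by norm_num : (-1 : ℤ) < 0),
        show ((-(-1 : ℤ) - 1).toNat) = 0 by norm_num, hid, mul_one]
  · intro u n hn
    exact if_neg (by omega)
  · intro r s t u v w
    exact hs_jacobi D hadd hHS hiter r s t u v w
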